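/- arXiv:2604.23800 — 6 statements merged into one kernel-verified Lean document; each statement's English description precedes it below -/
import Mathlib

section
/- Let p(z) = ∏_{k=1}^n p_k(z_k | pa_k(z)) be a positive density on ℝ^n that factorizes according to a DAG G. Suppose node i is a sink of G and its conditional density is Gaussian with additive noise of constant variance: log p_i(z_i | pa_i(z)) = -(1/2)((z_i - f_i(pa_i(z)))/σ_i)² - (1/2)log(2π σ_i²), where f_i is a smooth function of the parents of i only. Then for every j, the third-order mixed partial derivative ∂³ log p(z) / ∂z_i² ∂z_j equals zero. -/
/-- Partial derivative of a scalar function on `ℝ^n` in the `i`-th coordinate direction. -/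
noncomputable def pd {n : ℕ} (i : Fin n) (f : (Fin n → ℝ) → ℝ) : (Fin n → ℝ) → ℝ :=
  fun z => fderiv ℝ f z (Pi.single i 1)

lemma pd_line {n : ℕ} (i : Fin n) (F : (Fin n → ℝ) → ℝ) (z : Fin n → ℝ)
    (hF : DifferentiableAt ℝ F z) :
    pd i F z = deriv (fun t : ℝ => F (z + t • (Pi.single i 1 : Fin n → ℝ))) 0 := by
  have hc : HasDerivAt (fun t : ℝ => z + t • (Pi.single i 1 : Fin n → ℝ)) (Pi.single i 1) 0 := by
    simpa using ((hasDerivAt_id (0:ℝ)).smul_const (Pi.single i 1 : Fin n → ℝ)).const_add z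
  have h1 : HasDerivAt (fun t : ℝ => F (z + t • (Pi.single i 1 : Fin n → ℝ)))
      (fderiv ℝ F z (Pi.single i 1)) 0 := by
    have hF' : HasFDerivAt F (fderiv ℝ F z)
        ((fun t : ℝ => z + t • (Pi.single i 1 : Fin n → ℝ)) 0) := by
      simpa using hF.hasFDerivAt
    exact hF'.comp_hasDerivAt 0 hc
  exact (h1.deriv).symm

lemma pd_indep {n : ℕ} (i : Fin n) (F : (Fin n → ℝ) → ℝ)
    (hF : Differentiable ℝ F)
    (h : ∀ z z' : Fin n → ℝ, (∀ j, j ≠ i → z j = z' j) → F z = F z') :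
    ∀ z, pd i F z = 0 := by
  intro z
  rw [pd_line i F z (hF z)]
  have hconst : (fun t : ℝ => F (z + t • (Pi.single i 1 : Fin n → ℝ))) = fun _ => F z := by
    funext t
    apply h
    intro j hj
    simp [Pi.single_eq_of_ne hj]
  rw [hconst]
  simp

/-- If node `i` is a sink of a DAG and its conditional density is Gaussian with additive
noise of constant variance, then `∂³ log p / ∂z_i² ∂z_j = 0` for every `j`. -/
theorem stmt0 {n : ℕ} (E : Fin n → Fin n → Prop)
    (hacyc : ∀ a, ¬ Relation.TransGen E a a)
    (p : (Fin n → ℝ) → ℝ) (hp : ∀ z, 0 < p z)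
    (L : Fin n → (Fin n → ℝ) → ℝ)
    (hfac : ∀ z, Real.log (p z) = ∑ k, L k z)
    (hsmooth : ∀ k, ContDiff ℝ 3 (L k))
    (hdep : ∀ k (z z' : Fin n → ℝ),
      z k = z' k → (∀ j, E j k → z j = z' j) → L k z = L k z')
    (i : Fin n) (hsink : ∀ j, ¬ E i j)
    (f : (Fin n → ℝ) → ℝ) (hf : ContDiff ℝ 3 f)
    (hfdep : ∀ z z' : Fin n → ℝ, (∀ j, E j i → z j = z' j) → f z = f z')
    (σ : ℝ) (hσ : 0 < σ)
    (hGauss : ∀ z, L i z =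
      -(1/2) * ((z i - f z) / σ)^2 - (1/2) * Real.log (2 * Real.pi * σ^2)) :
    ∀ (j : Fin n) (z : Fin n → ℝ),
      pd j (pd i (pd i (fun w => Real.log (p w)))) z = 0 := by
  intro j z
  have hσ2 : (σ:ℝ)^2 ≠ 0 := pow_ne_zero _ (ne_of_gt hσ)
  have hEii : ¬ E i i := fun h => hacyc i (Relation.TransGen.single h)
  have hone : (3:WithTop ℕ∞) ≠ 0 := by norm_num
  -- f does not depend on coordinate i
  have hfi : ∀ w w' : Fin n → ℝ, (∀ j, j ≠ i → w j = w' j) → f w = f w' := by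
    intro w w' h
    exact hfdep w w' (fun k hk => h k (fun e => hEii (e ▸ hk)))
  -- differentiability of f
  have hfd : Differentiable ℝ f := hf.differentiable hone
  have hfi0 : ∀ w, pd i f w = 0 := pd_indep i f hfd hfi
  -- coordinates j ≠ i of z + t • e_i agree with z
  have hline : ∀ (w : Fin n → ℝ) (t : ℝ), f (w + t • (Pi.single i 1 : Fin n → ℝ)) = f w := by
    intro w t
    apply hfi
    intro k hk
    simp [Pi.single_eq_of_ne hk]
  -- L k does not depend on z_i when k ≠ i
  have hLk0 : ∀ k, k ≠ i → ∀ w, pd i (L k) w = 0 := by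
    intro k hk
    apply pd_indep i (L k) ((hsmooth k).differentiable hone)
    intro w w' h
    have h1 : w k = w' k := h k hk
    refine hdep k w w' h1 (fun m hm => h m ?_)
    intro e
    exact hsink k (e ▸ hm)
  -- first derivative of L i
  have hLi : ∀ w, pd i (L i) w = -(w i - f w) / σ^2 := by
    intro w
    rw [pd_line i (L i) w (((hsmooth i).differentiable hone) w)]
    have heq : (fun t : ℝ => L i (w + t • (Pi.single i 1 : Fin n → ℝ))) =
        fun t : ℝ => -(1/2) * ((w i + t - f w) / σ)^2
          - (1/2) * Real.log (2 * Real.pi * σ^2) := by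
      funext t
      rw [hGauss, hline]
      simp [Pi.single_eq_same]
    rw [heq]
    have h0 : HasDerivAt (fun t : ℝ => (w i + t - f w) / σ) (1/σ) 0 :=
      (((hasDerivAt_id (0:ℝ)).const_add (w i)).sub_const (f w)).div_const σ
    have h1 : HasDerivAt (fun t : ℝ => -(1/2) * ((w i + t - f w) / σ)^2
        - (1/2) * Real.log (2 * Real.pi * σ^2))
        (-(1/2) * (2 * ((w i + 0 - f w)/σ)^1 * (1/σ))) 0 :=
      (((h0.pow 2)).const_mul (-(1/2))).sub_const _
    rw [h1.deriv]
    field_simp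
    ring
  -- the first pd of log p
  have hlog : (fun w => Real.log (p w)) = fun w => ∑ k, L k w := funext hfac
  have hpd1 : pd i (fun w => Real.log (p w)) = fun w => -(w i - f w) / σ^2 := by
    funext w
    rw [hlog]
    have hdiff : ∀ k ∈ Finset.univ, DifferentiableAt ℝ (L k) w :=
      fun k _ => ((hsmooth k).differentiable hone) w
    have : pd i (fun w => ∑ k, L k w) w = ∑ k, pd i (L k) w := by
      simp only [pd, fderiv_fun_sum hdiff, ContinuousLinearMap.sum_apply]
    rw [this, Finset.sum_eq_single i (fun k _ hk => hLk0 k hk w) (by simp)]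
    exact hLi w
  -- the second pd
  have hdiff2 : Differentiable ℝ (fun w : Fin n → ℝ => -(w i - f w) / σ^2) := by
    fun_prop
  have hpd2 : pd i (pd i (fun w => Real.log (p w))) = fun _ => -1 / σ^2 := by
    funext w
    rw [hpd1, pd_line i _ w (hdiff2 w)]
    have heq : (fun t : ℝ => -((w + t • (Pi.single i 1 : Fin n → ℝ)) i - f (w + t • (Pi.single i 1 : Fin n → ℝ))) / σ^2)
        = fun t : ℝ => -(w i + t - f w) / σ^2 := by
      funext t
      rw [hline]
      simp [Pi.single_eq_same]
    rw [heq]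
    have h1 : HasDerivAt (fun t : ℝ => -(w i + t - f w) / σ^2) (-1 / σ^2) 0 := by
      simpa using ((((hasDerivAt_id (0:ℝ)).const_add (w i)).sub_const (f w)).neg).div_const (σ^2)
    exact h1.deriv
  rw [hpd2]
  simp [pd]
end

section
/- Let p(z) = ∏_{k=1}^n p_k(z_k | pa_k(z)) be a positive density on ℝ^n factorizing according to a DAG G. Suppose node i is a sink of G with heteroscedastic Gaussian conditional: log p_i(z_i | pa_i(z)) = -(1/2)((z_i - f_i(pa_i(z)))/σ_i(pa_i(z)))² - log σ_i(pa_i(z)) - (1/2)log(2π), where f_i and σ_i > 0 are smooth functions of the parents of i only. Then ∂² log p(z) / ∂z_i² = -1/σ_i(pa_i(z))², and consequently for every j that is not a parent of i, ∂³ log p(z) / ∂z_i² ∂z_j = 0. -/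
lemma update_ne {n : ℕ} {z : Fin n → ℝ} {i j : Fin n} (h : j ≠ i) (t : ℝ) :
    Function.update z i t j = z j := Function.update_of_ne h t z

lemma pdAux_hasDerivAt_update {n : ℕ} (z : Fin n → ℝ) (i : Fin n) (t : ℝ) :
    HasDerivAt (fun s : ℝ => Function.update z i s) (Pi.single i 1) t := by
  have h : (fun s : ℝ => Function.update z i s)
      = fun s : ℝ => z + (s - z i) • (Pi.single i 1 : Fin n → ℝ) := by
    funext s; funext k
    by_cases hk : k = i
    · subst hk; simp
    · simp [Function.update_of_ne hk, Pi.single_eq_of_ne hk]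
  rw [h]
  simpa using (((hasDerivAt_id t).sub_const (z i)).smul_const (Pi.single i (1:ℝ))).const_add z

lemma pd_hasDerivAt {n : ℕ} (i : Fin n) (f : (Fin n → ℝ) → ℝ) (z : Fin n → ℝ)
    (hf : DifferentiableAt ℝ f z) :
    HasDerivAt (fun t => f (Function.update z i t)) (pd i f z) (z i) := by
  have hz : Function.update z i (z i) = z := Function.update_eq_self i z
  have key := HasFDerivAt.comp_hasDerivAt (z i)
    (by rw [hz]; exact hf.hasFDerivAt) (pdAux_hasDerivAt_update z i (z i))
  exact key

lemma pd_eq {n : ℕ} {i : Fin n} {f : (Fin n → ℝ) → ℝ} {z : Fin n → ℝ} {c : ℝ}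
    (hf : DifferentiableAt ℝ f z)
    (h : HasDerivAt (fun t => f (Function.update z i t)) c (z i)) :
    pd i f z = c :=
  (pd_hasDerivAt i f z hf).unique h

lemma pd_eq_zero {n : ℕ} {i : Fin n} {f : (Fin n → ℝ) → ℝ} {z : Fin n → ℝ}
    (hf : DifferentiableAt ℝ f z)
    (h : ∀ t, f (Function.update z i t) = f z) :
    pd i f z = 0 := by
  refine pd_eq hf ?_
  have h2 : (fun t => f (Function.update z i t)) = fun _ => f z := funext h
  rw [h2]; exact hasDerivAt_const _ _

/-- If node `i` is a sink of a DAG with heteroscedastic Gaussian conditional, then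
`∂² log p / ∂z_i² = -1/σ_i(pa)²` and `∂³ log p / ∂z_i² ∂z_j = 0` for `j` not a parent of `i`. -/
theorem stmt1 {n : ℕ} (E : Fin n → Fin n → Prop)
    (hacyc : ∀ a, ¬ Relation.TransGen E a a)
    (p : (Fin n → ℝ) → ℝ) (hp : ∀ z, 0 < p z)
    (L : Fin n → (Fin n → ℝ) → ℝ)
    (hfac : ∀ z, Real.log (p z) = ∑ k, L k z)
    (hsmooth : ∀ k, ContDiff ℝ 3 (L k))
    (hdep : ∀ k (z z' : Fin n → ℝ),
      z k = z' k → (∀ j, E j k → z j = z' j) → L k z = L k z')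
    (i : Fin n) (hsink : ∀ j, ¬ E i j)
    (f : (Fin n → ℝ) → ℝ) (hf : ContDiff ℝ 3 f)
    (hfdep : ∀ z z' : Fin n → ℝ, (∀ j, E j i → z j = z' j) → f z = f z')
    (σ : (Fin n → ℝ) → ℝ) (hσpos : ∀ z, 0 < σ z) (hσC : ContDiff ℝ 3 σ)
    (hσdep : ∀ z z' : Fin n → ℝ, (∀ j, E j i → z j = z' j) → σ z = σ z')
    (hGauss : ∀ z, L i z =
      -(1/2) * ((z i - f z) / σ z)^2 - Real.log (σ z) - (1/2) * Real.log (2 * Real.pi)) :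
    ∀ z : Fin n → ℝ,
      pd i (pd i (fun w => Real.log (p w))) z = -1 / (σ z)^2 ∧
      ∀ j : Fin n, ¬ E j i →
        pd j (pd i (pd i (fun w => Real.log (p w)))) z = 0 := by
  have hEii : ¬ E i i := fun h => hacyc i (Relation.TransGen.single h)
  have hLd : ∀ k, Differentiable ℝ (L k) := fun k => (hsmooth k).differentiable (by norm_num)
  have hfd : Differentiable ℝ f := hf.differentiable (by norm_num)
  have hσd : Differentiable ℝ σ := hσC.differentiable (by norm_num)
  have hσ2 : ∀ w, (σ w)^2 ≠ 0 := fun w => pow_ne_zero _ (hσpos w).ne'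
  have hproj : Differentiable ℝ (fun w : Fin n → ℝ => w i) := fun w =>
    (ContinuousLinearMap.proj i : (Fin n → ℝ) →L[ℝ] ℝ).differentiableAt
  set G : (Fin n → ℝ) → ℝ := fun w => (f w - w i) / (σ w)^2 with hG
  have hsub : Differentiable ℝ (fun w => f w - w i) := hfd.sub hproj
  have hpow : Differentiable ℝ (fun w : Fin n → ℝ => (σ w)^2) := hσd.pow 2
  have hGd : Differentiable ℝ G := by
    simp only [hG, div_eq_mul_inv]
    exact hsub.mul (hpow.inv hσ2)
  have hlogp : (fun w => Real.log (p w)) = fun w => ∑ k, L k w := funext hfac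
  have hfconst : ∀ (w : Fin n → ℝ) t, f (Function.update w i t) = f w := fun w t =>
    hfdep _ _ (fun j hj => update_ne (fun h : j = i => hEii (h ▸ hj)) t)
  have hσconst : ∀ (w : Fin n → ℝ) t, σ (Function.update w i t) = σ w := fun w t =>
    hσdep _ _ (fun j hj => update_ne (fun h : j = i => hEii (h ▸ hj)) t)
  have step1 : ∀ w, pd i (fun x => ∑ k, L k x) w = G w := by
    intro w
    have hsum : pd i (fun x => ∑ k, L k x) w = ∑ k, pd i (L k) w := by
      simp only [pd]
      rw [fderiv_fun_sum (fun k _ => (hLd k).differentiableAt)]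
      simp
    rw [hsum]
    have hzero : ∀ k ∈ Finset.univ, k ≠ i → pd i (L k) w = 0 := by
      intro k _ hk
      refine pd_eq_zero ((hLd k) _) (fun t => hdep k _ _ ?_ ?_)
      · exact update_ne hk t
      · intro j hj
        have hji : j ≠ i := fun h => hsink k (h ▸ hj)
        exact update_ne hji t
    rw [Finset.sum_eq_single i hzero (by simp)]
    refine pd_eq ((hLd i) _) ?_
    have hrw : (fun t => L i (Function.update w i t))
        = fun t => -(1/2) * ((t - f w)/σ w)^2 - Real.log (σ w)
            - (1/2) * Real.log (2 * Real.pi) := by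
      funext t
      rw [hGauss, hfconst, hσconst, Function.update_self]
    rw [hrw]
    have h1 := (((((hasDerivAt_id (w i)).sub_const (f w)).div_const (σ w)).pow 2).const_mul
        (-(1/2 : ℝ))).sub_const (Real.log (σ w)) |>.sub_const ((1/2) * Real.log (2 * Real.pi))
    refine h1.congr_deriv ?_
    have hσ0 : σ w ≠ 0 := (hσpos w).ne'
    simp only [hG, id]
    field_simp
    have hσσ : σ w * (σ w)⁻¹ = 1 := mul_inv_cancel₀ hσ0
    linear_combination (2 * f w - 2 * w i) * hσσ
  have step2 : ∀ w, pd i (pd i (fun x => ∑ k, L k x)) w = -1/(σ w)^2 := by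
    intro w
    have hfun : pd i (fun x => ∑ k, L k x) = G := funext step1
    rw [hfun]
    refine pd_eq (hGd _) ?_
    have hrw : (fun t => G (Function.update w i t)) = fun t => (f w - t)/(σ w)^2 := by
      funext t
      simp only [hG, hfconst, hσconst, Function.update_self]
    rw [hrw]
    have h1 := ((hasDerivAt_const (w i) (f w)).sub (hasDerivAt_id (w i))).div_const ((σ w)^2)
    refine h1.congr_deriv ?_
    ring
  intro z
  constructor
  · rw [hlogp]; exact step2 z
  · intro j hj
    have hfun2 : pd i (pd i (fun w => Real.log (p w))) = fun w => -1/(σ w)^2 := by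
      rw [hlogp]; exact funext step2
    rw [hfun2]
    refine pd_eq_zero ?_ ?_
    · have : Differentiable ℝ (fun w => -1/(σ w)^2) := by
        simp only [div_eq_mul_inv]
        exact (differentiable_const (-1:ℝ)).mul (hpow.inv hσ2)
      exact this z
    · intro t
      have hσj : σ (Function.update z j t) = σ z := hσdep _ _ (fun k hk =>
        update_ne (fun h : k = j => hj (h ▸ hk)) t)
      simp only [hσj]
end

section
/- Let G be a DAG on nodes {1,…,n}, and let M be the moral graph of G. For a node i, define the surrounding parents sur(i; G) as the set of parents j of i such that j is also a parent of every child of i. Define the intimate neighbors Ψ(i; M) as the set of nodes j ≠ i adjacent to i in M that are adjacent to all other neighbors of i in M. Then sur(i; G) ⊆ Ψ(i; M). -/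
/-- Surrounding parents are intimate neighbors in the moral graph: if `j` is a parent of `i` that
is also a parent of every child of `i`, then `j` is adjacent to `i` in the moral graph `M` and
adjacent to all other neighbors of `i` in `M`. -/
theorem stmt5 {n : ℕ} (E : Fin n → Fin n → Prop)
    (hacyc : ∀ a, ¬ Relation.TransGen E a a)
    (M : Fin n → Fin n → Prop)
    (hM : ∀ a b, M a b ↔ a ≠ b ∧ (E a b ∨ E b a ∨ ∃ c, E a c ∧ E b c))
    (i j : Fin n)
    (hpar : E j i) (hall : ∀ c, E i c → E j c) :
    j ≠ i ∧ M i j ∧ ∀ k, k ≠ j → M i k → M j k := by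
  have hji : j ≠ i := by
    rintro rfl
    exact hacyc j (Relation.TransGen.single hpar)
  refine ⟨hji, (hM i j).2 ⟨hji.symm, Or.inr (Or.inl hpar)⟩, ?_⟩
  intro k hkj hMik
  obtain ⟨hik, hcase⟩ := (hM i k).1 hMik
  refine (hM j k).2 ⟨hkj.symm, ?_⟩
  rcases hcase with h | h | ⟨c, hic, hkc⟩
  · exact Or.inl (hall k h)
  · exact Or.inr (Or.inr ⟨i, hpar, h⟩)
  · exact Or.inr (Or.inr ⟨c, hall c hic, hkc⟩)
end

section
/- Let G be a DAG on {1,…,n} and let α be a topological (causal) order of G, i.e., α is a bijection on {1,…,n} such that whenever α(a) → α(b) is an edge of G one has a < b. For k ∈ {1,…,n}, let G_k denote the induced subgraph of G on the node set {α(1),…,α(k)}, and let M_k be its moral graph. For i ∈ {1,…,n−1}, define Ψ(α(i); M_k) as the set of nodes adjacent to α(i) in M_k that are also adjacent to every other neighbor of α(i) in M_k, and define sur(α(i); G) as the set of parents of α(i) in G that are parents of every child of α(i) in G. Then ⋂_{k=i}^{n} Ψ(α(i); M_k) ⊆ sur(α(i); G). -/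
/-- The prefix `{α(0),…,α(k)}` of a topological order `α`. -/
def prefixSet {n : ℕ} (α : Fin n → Fin n) (k : Fin n) : Set (Fin n) :=
  {v | ∃ a, a ≤ k ∧ α a = v}

/-- Moral-graph adjacency within the induced subgraph on the prefix `{α(0),…,α(k)}`:
two distinct nodes of the prefix are adjacent iff they are adjacent in the DAG or share
a common child within the prefix. -/
def MadjSub {n : ℕ} (E : Fin n → Fin n → Prop) (S : Set (Fin n)) (a b : Fin n) : Prop :=
  a ∈ S ∧ b ∈ S ∧ a ≠ b ∧ (E a b ∨ E b a ∨ ∃ c ∈ S, E a c ∧ E b c)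

/-- If `j` is an intimate neighbor of `α(i)` in the moral graph of every prefix subgraph
`G_k` with `i ≤ k`, then `j` is a surrounding parent of `α(i)` in `G`. -/
theorem stmt6 {n : ℕ} (E : Fin n → Fin n → Prop) (α : Fin n → Fin n)
    (hα : Function.Bijective α)
    (htopo : ∀ a b, E (α a) (α b) → a < b)
    (i : Fin n) (j : Fin n)
    (hΨ : ∀ k : Fin n, i ≤ k →
      MadjSub E (prefixSet α k) (α i) j ∧
        ∀ l, l ≠ j → MadjSub E (prefixSet α k) (α i) l →
          MadjSub E (prefixSet α k) j l) :
    E j (α i) ∧ ∀ c, E (α i) c → E j c := by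
  obtain ⟨hmem0, hmem1, hne, hadj⟩ := (hΨ i le_rfl).1
  obtain ⟨b, hble, rfl⟩ := hmem1
  have hbi : b < i := lt_of_le_of_ne hble (fun h => hne (by rw [h]))
  have hji : E (α b) (α i) := by
    rcases hadj with h | h | ⟨c, ⟨e, hel, rfl⟩, h1, _⟩
    · exact absurd (htopo i b h) (not_lt.2 hbi.le)
    · exact h
    · exact absurd (htopo i e h1) (not_lt.2 hel)
  refine ⟨hji, ?_⟩
  intro c hc
  obtain ⟨m, rfl⟩ := hα.2 c
  have him : i < m := htopo i m hc
  have hne2 : α m ≠ α b := fun h =>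
    absurd (hα.1 h) ((lt_trans hbi him).ne')
  have hmadj : MadjSub E (prefixSet α m) (α i) (α m) :=
    ⟨⟨i, him.le, rfl⟩, ⟨m, le_rfl, rfl⟩,
      fun h => absurd (hα.1 h) (him.ne), Or.inl hc⟩
  obtain ⟨_, _, _, hadj2⟩ := (hΨ m him.le).2 (α m) hne2 hmadj
  rcases hadj2 with h | h | ⟨d, ⟨e, hel, rfl⟩, _, h2⟩
  · exact h
  · exact absurd (htopo m b h) (not_lt.2 (lt_trans hbi him).le)
  · exact absurd (htopo m e h2) (not_lt.2 hel)
end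

section
/- Let p be a positive, twice continuously differentiable density on ℝ^n. Then for distinct indices i and j, the cross second-order partial derivative ∂² log p(z)/∂z_i ∂z_j is identically zero if and only if p factorizes as p(z) = g(z_{-j}) h(z_{-i}) for some positive functions g, h (equivalently, Z_i and Z_j are conditionally independent given all other coordinates). -/
private lemma hasDerivAt_line {n : ℕ} {F : (Fin n → ℝ) → ℝ} (hF : Differentiable ℝ F)
    (c v : Fin n → ℝ) (s : ℝ) :
    HasDerivAt (fun t : ℝ => F (c + t • v)) (fderiv ℝ F (c + s • v) v) s := by
  have h1 : HasDerivAt (fun t : ℝ => c + t • v) v s := by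
    simpa using ((hasDerivAt_id s).smul_const v).const_add c
  exact ((hF (c + s • v)).hasFDerivAt.comp_hasDerivAt s h1)

private lemma const_of_dirDeriv_zero {n : ℕ} {F : (Fin n → ℝ) → ℝ} (hF : Differentiable ℝ F)
    {v : Fin n → ℝ} (h : ∀ z, fderiv ℝ F z v = 0) (c : Fin n → ℝ) (t : ℝ) :
    F (c + t • v) = F c := by
  have hd : ∀ s : ℝ, HasDerivAt (fun t : ℝ => F (c + t • v)) 0 s := fun s => by
    simpa [h] using hasDerivAt_line hF c v s
  have := is_const_of_deriv_eq_zero (f := fun t : ℝ => F (c + t • v))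
    (fun s => (hd s).differentiableAt) (fun s => (hd s).deriv) t 0
  simpa using this

private lemma dirDeriv_zero_of_const {n : ℕ} {F : (Fin n → ℝ) → ℝ} (hF : Differentiable ℝ F)
    {v : Fin n → ℝ} (c : Fin n → ℝ) (h : ∀ t : ℝ, F (c + t • v) = F c) :
    fderiv ℝ F c v = 0 := by
  have h1 := hasDerivAt_line hF c v 0
  rw [show c + (0:ℝ) • v = c by simp] at h1
  have h2 : HasDerivAt (fun t : ℝ => F (c + t • v)) 0 0 := by
    simp only [h]; exact hasDerivAt_const 0 (F c)
  exact h1.unique h2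

private lemma fderiv_dir_eq_of_shift {n : ℕ} {F : (Fin n → ℝ) → ℝ} (hF : Differentiable ℝ F)
    {v : Fin n → ℝ} {c₁ c₂ : Fin n → ℝ} {K : ℝ}
    (h : ∀ s : ℝ, F (c₁ + s • v) = F (c₂ + s • v) + K) :
    fderiv ℝ F c₁ v = fderiv ℝ F c₂ v := by
  have h1 := hasDerivAt_line hF c₁ v 0
  have h2 := (hasDerivAt_line hF c₂ v 0).add_const K
  rw [show c₁ + (0:ℝ) • v = c₁ by simp] at h1
  rw [show c₂ + (0:ℝ) • v = c₂ by simp] at h2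
  simp only [h] at h1
  exact h1.unique h2

/-- Factorization criterion: for a positive C² density `p`, the cross second derivative
`∂² log p / ∂z_i ∂z_j` vanishes identically iff `p(z) = g(z₋ⱼ) h(z₋ᵢ)` for positive
`g` (not depending on coordinate `j`) and `h` (not depending on coordinate `i`). -/
theorem stmt9 {n : ℕ} (p : (Fin n → ℝ) → ℝ)
    (hp : ∀ z, 0 < p z) (hpC : ContDiff ℝ 2 p)
    (i j : Fin n) (hij : i ≠ j) :
    (∀ z, pd j (pd i (fun w => Real.log (p w))) z = 0) ↔
      ∃ g h : (Fin n → ℝ) → ℝ,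
        (∀ z, 0 < g z) ∧ (∀ z, 0 < h z) ∧
        (∀ z z' : Fin n → ℝ, (∀ k, k ≠ j → z k = z' k) → g z = g z') ∧
        (∀ z z' : Fin n → ℝ, (∀ k, k ≠ i → z k = z' k) → h z = h z') ∧
        (∀ z, p z = g z * h z) := by
  set f : (Fin n → ℝ) → ℝ := fun w => Real.log (p w) with hfdef
  have hf : ContDiff ℝ 2 f := by
    rw [contDiff_iff_contDiffAt]
    intro z
    exact (Real.contDiffAt_log.mpr (hp z).ne').comp z hpC.contDiffAt
  have hf1 : Differentiable ℝ f := hf.differentiable (by norm_num)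
  have hF : ContDiff ℝ 1 (pd i f) := by
    have h1 : ContDiff ℝ 1 (fderiv ℝ f) := hf.fderiv_right (by norm_num)
    exact h1.clm_apply contDiff_const
  have hF1 : Differentiable ℝ (pd i f) := hF.differentiable (by norm_num)
  -- coordinate vector
  set e : Fin n → (Fin n → ℝ) := fun k => Pi.single k (1:ℝ) with hedef
  constructor
  · intro hcross
    -- ∀ z, fderiv (pd i f) z (e j) = 0
    have hcross' : ∀ z, fderiv ℝ (pd i f) z (e j) = 0 := fun z => hcross z
    have hA : ∀ c (t : ℝ), pd i f (c + t • e j) = pd i f c :=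
      const_of_dirDeriv_zero hF1 hcross'
    refine ⟨fun z => p (Function.update z j 0),
      fun z => p (Function.update z i 0) / p (Function.update (Function.update z i 0) j 0),
      fun z => hp _, fun z => div_pos (hp _) (hp _), ?_, ?_, ?_⟩
    · intro z z' hzz'
      show p (Function.update z j 0) = p (Function.update z' j 0)
      have hup : Function.update z j 0 = Function.update z' j 0 := by
        funext k
        by_cases hk : k = j
        · subst hk; simp
        · simp [Function.update_apply, hk, hzz' k hk]
      rw [hup]
    · intro z z' hzz'
      show p (Function.update z i 0) / p (Function.update (Function.update z i 0) j 0) =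
        p (Function.update z' i 0) / p (Function.update (Function.update z' i 0) j 0)
      have hup : Function.update z i 0 = Function.update z' i 0 := by
        funext k
        by_cases hk : k = i
        · subst hk; simp
        · simp [Function.update_apply, hk, hzz' k hk]
      rw [hup]
    · intro z
      set a : Fin n → ℝ := Function.update z i 0 with hadef
      set b : Fin n → ℝ := Function.update a j 0 with hbdef
      have hE1 : a + (z i) • e i = z := by
        funext k
        by_cases hk : k = i
        · subst hk; simp [hadef, hedef]
        · simp [hadef, hedef, Function.update_apply, hk, Pi.single_apply]
      have hE2 : b + (z i) • e i = Function.update z j 0 := by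
        funext k
        by_cases hk : k = i
        · subst hk
          simp [hadef, hbdef, hedef, Function.update_apply, hij]
        · simp [hadef, hbdef, hedef, Function.update_apply, hk, Pi.single_apply]
      have hE3 : a = b + (z j) • e j := by
        funext k
        by_cases hk : k = j
        · subst hk
          simp [hadef, hbdef, hedef, Function.update_apply, (Ne.symm hij)]
        · simp [hbdef, hedef, Function.update_apply, hk, Pi.single_apply]
      -- q s = f (a + s • e i) - f (b + s • e i) is constant
      have hq : ∀ s : ℝ, HasDerivAt (fun s : ℝ => f (a + s • e i) - f (b + s • e i)) 0 s := by
        intro s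
        have h1 := hasDerivAt_line hf1 a (e i) s
        have h2 := hasDerivAt_line hf1 b (e i) s
        have h3 : fderiv ℝ f (a + s • e i) (e i) = fderiv ℝ f (b + s • e i) (e i) := by
          have h4 := hA (b + s • e i) (z j)
          have h5 : b + s • e i + (z j) • e j = a + s • e i := by
            rw [hE3]; abel
          rw [h5] at h4
          exact h4
        have h7 := h1.sub h2
        rw [h3, sub_self] at h7
        exact h7
      have hconst := is_const_of_deriv_eq_zero
        (f := fun s : ℝ => f (a + s • e i) - f (b + s • e i))
        (fun s => (hq s).differentiableAt) (fun s => (hq s).deriv) (z i) 0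
      simp only [zero_smul, add_zero] at hconst
      rw [hE1, hE2] at hconst
      -- hconst : f z - f (update z j 0) = f a - f b
      have hlog : Real.log (p z) - Real.log (p (Function.update z j 0)) =
          Real.log (p a) - Real.log (p b) := hconst
      have hz := (hp z).ne'
      have hT := (hp (Function.update z j 0)).ne'
      have ha := (hp a).ne'
      have hb := (hp b).ne'
      have hexp : p z * p b = p (Function.update z j 0) * p a := by
        have h6 : Real.log (p z * p b) = Real.log (p (Function.update z j 0) * p a) := by
          rw [Real.log_mul hz hb, Real.log_mul hT ha]; linarith
        have := congrArg Real.exp h6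
        rwa [Real.exp_log (mul_pos (hp z) (hp b)),
          Real.exp_log (mul_pos (hp _) (hp a))] at this
      field_simp
      exact (eq_div_iff hb).mpr hexp
  · rintro ⟨g, h, hg, hh, hgj, hhi, hfac⟩ z
    show fderiv ℝ (pd i f) z (e j) = 0
    apply dirDeriv_zero_of_const hF1
    intro t
    show fderiv ℝ f (z + t • e j) (e i) = fderiv ℝ f z (e i)
    apply fderiv_dir_eq_of_shift hf1 (K := f (z + t • e j) - f z)
    intro s
    -- key product identity
    have hgeq1 : g (z + t • e j + s • e i) = g (z + s • e i) := by
      apply hgj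
      intro k hk
      simp [hedef, Pi.single_apply, hk]
    have hheq1 : h (z + t • e j + s • e i) = h (z + t • e j) := by
      apply hhi
      intro k hk
      simp [hedef, Pi.single_apply, hk]
    have hgeq2 : g (z + t • e j) = g z := by
      apply hgj
      intro k hk
      simp [hedef, Pi.single_apply, hk]
    have hheq2 : h (z + s • e i) = h z := by
      apply hhi
      intro k hk
      simp [hedef, Pi.single_apply, hk]
    have hprod : p (z + t • e j + s • e i) * p z = p (z + s • e i) * p (z + t • e j) := by
      rw [hfac, hfac, hfac, hfac, hgeq1, hheq1, hgeq2, hheq2]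
      ring
    have h6 : Real.log (p (z + t • e j + s • e i) * p z) =
        Real.log (p (z + s • e i) * p (z + t • e j)) := by rw [hprod]
    rw [Real.log_mul (hp _).ne' (hp _).ne', Real.log_mul (hp _).ne' (hp _).ne'] at h6
    show Real.log (p (z + t • e j + s • e i)) =
      Real.log (p (z + s • e i)) + (Real.log (p (z + t • e j)) - Real.log (p z))
    linarith
end

section
/- Let v : ℝ^n → ℝ^n be a C¹ map whose Jacobian J(x) is invertible everywhere, I ⊆ {1,…,n}, and suppose J(x)_{ij} = 0 for all i ∈ I, j ∉ I, and all x. If additionally v is a diffeomorphism of ℝ^n onto ℝ^n, then the map from the I-coordinates to the I-coordinates, i.e., x_I ↦ (v(x))_I, is well defined (depends only on x_I) and is itself a diffeomorphism of ℝ^{|I|} onto its image. -/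
/-- The map induced on the `I`-coordinates by `v`, completing the remaining coordinates by `0`. -/
noncomputable def restrictMap {n : ℕ} (I : Set (Fin n)) [DecidablePred (· ∈ I)]
    (v : (Fin n → ℝ) → (Fin n → ℝ)) : (↥I → ℝ) → (↥I → ℝ) :=
  fun z i => v (fun k => if h : k ∈ I then z ⟨k, h⟩ else 0) i.1


section Aux
variable {n : ℕ} (I : Set (Fin n)) [DecidablePred (· ∈ I)]

/-- extension by zero, as a continuous linear map -/
noncomputable def extCLM : (↥I → ℝ) →L[ℝ] (Fin n → ℝ) :=
  ContinuousLinearMap.pi (fun k =>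
    if h : k ∈ I then ContinuousLinearMap.proj (⟨k, h⟩ : ↥I) else 0)

noncomputable def projCLM : (Fin n → ℝ) →L[ℝ] (↥I → ℝ) :=
  ContinuousLinearMap.pi (fun i => ContinuousLinearMap.proj (i : Fin n))

lemma extCLM_apply (z : ↥I → ℝ) (k : Fin n) :
    extCLM I z k = if h : k ∈ I then z ⟨k, h⟩ else 0 := by
  rw [extCLM, ContinuousLinearMap.pi_apply]
  split <;> simp

lemma projCLM_apply (y : Fin n → ℝ) (i : ↥I) : projCLM I y i = y i := rfl

lemma restrictMap_eq (v : (Fin n → ℝ) → (Fin n → ℝ)) :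
    restrictMap I v = fun z => projCLM I (v (extCLM I z)) := by
  funext z i
  simp only [restrictMap, projCLM_apply]
  congr 1
  funext k
  rw [extCLM_apply]

/-- block triangularity implies preservation of the subspace vanishing on `I` -/
lemma blockV {T : (Fin n → ℝ) →L[ℝ] (Fin n → ℝ)}
    (hT : ∀ i ∈ I, ∀ j ∉ I, T (Pi.single j 1) i = 0)
    {u : Fin n → ℝ} (hu : ∀ i ∈ I, u i = 0) : ∀ i ∈ I, T u i = 0 := by
  intro i hi
  have hsum : u = ∑ j, Pi.single j (u j) := by
    simp [Finset.univ_sum_single]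
  rw [hsum, map_sum, Finset.sum_apply]
  refine Finset.sum_eq_zero fun j _ => ?_
  have hsingle : (Pi.single j (u j) : Fin n → ℝ) = (u j) • (Pi.single j (1:ℝ) : Fin n → ℝ) := by
    rw [← Pi.single_smul, smul_eq_mul, mul_one]
  rw [hsingle, map_smul, Pi.smul_apply, smul_eq_mul]
  by_cases hj : j ∈ I
  · rw [hu j hj]; ring
  · rw [hT i hi j hj]; ring

lemma fderiv_coord (f : (Fin n → ℝ) → (Fin n → ℝ)) (hf : Differentiable ℝ f)
    (x : Fin n → ℝ) (i : Fin n) (u : Fin n → ℝ) :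
    fderiv ℝ (fun y => f y i) x u = fderiv ℝ f x u i := by
  have h := ((ContinuousLinearMap.proj (R := ℝ) (φ := fun _ : Fin n => ℝ) i).hasFDerivAt
    (x := f x)).comp x (hf x).hasFDerivAt
  have heq : (fun y => f y i) = (⇑(ContinuousLinearMap.proj (R := ℝ) (φ := fun _ : Fin n => ℝ) i)) ∘ f := rfl
  rw [heq, h.fderiv]
  rfl

lemma depOnly (f : (Fin n → ℝ) → (Fin n → ℝ)) (hf : ContDiff ℝ 1 f)
    (hb : ∀ x, ∀ i ∈ I, ∀ j ∉ I, fderiv ℝ f x (Pi.single j 1) i = 0) :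
    ∀ x y : Fin n → ℝ, (∀ i ∈ I, x i = y i) → ∀ i ∈ I, f x i = f y i := by
  intro x y hxy i hi
  have hd := hf.differentiable one_ne_zero
  set c : ℝ → (Fin n → ℝ) := fun t => x + t • (y - x) with hc_def
  have hc : ∀ t : ℝ, HasDerivAt c (y - x) t := by
    intro t
    simpa [hc_def] using ((hasDerivAt_id t).smul_const (y - x)).const_add x
  have key : ∀ t : ℝ, HasDerivAt (fun t => f (c t) i) 0 t := by
    intro t
    have h2 := ((hd (c t)).hasFDerivAt).comp_hasDerivAt t (hc t)
    have h3 : HasDerivAt (fun t => f (c t) i) (fderiv ℝ f (c t) (y - x) i) t := by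
      have := ((ContinuousLinearMap.proj (R := ℝ) (φ := fun _ : Fin n => ℝ) i).hasFDerivAt
        (x := f (c t))).comp_hasDerivAt t h2
      exact this
    have hz : fderiv ℝ f (c t) (y - x) i = 0 := by
      refine blockV I (fun i hi j hj => hb (c t) i hi j hj) ?_ i hi
      intro i' hi'
      simp [hxy i' hi']
    exact hz ▸ h3
  have hconst := is_const_of_deriv_eq_zero (𝕜 := ℝ) (f := fun t => f (c t) i)
    (fun t => (key t).differentiableAt) (fun t => (key t).deriv) 1 0
  have h0 : c 0 = x := by simp [hc_def]
  have h1 : c 1 = y := by simp [hc_def]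
  rw [h0, h1] at hconst
  exact hconst.symm

/-- the submodule of vectors vanishing on `I` -/
def Vsub : Submodule ℝ (Fin n → ℝ) where
  carrier := {u | ∀ i ∈ I, u i = 0}
  add_mem' := fun ha hb i hi => by simp [ha i hi, hb i hi]
  zero_mem' := fun i hi => rfl
  smul_mem' := fun c u hu i hi => by simp [hu i hi]

lemma mem_Vsub {u : Fin n → ℝ} : u ∈ Vsub I ↔ ∀ i ∈ I, u i = 0 := Iff.rfl

end Aux
section Aux2
variable {n : ℕ} (I : Set (Fin n)) [DecidablePred (· ∈ I)]

lemma keyInv (T T' : (Fin n → ℝ) →L[ℝ] (Fin n → ℝ))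
    (hT' : ∀ i ∈ I, ∀ j ∉ I, T' (Pi.single j 1) i = 0)
    (hTT' : ∀ u, T' (T u) = u) (z' : ↥I → ℝ) :
    projCLM I (T' (extCLM I (projCLM I (T (extCLM I z'))))) = z' := by
  have hr : ∀ i ∈ I, (T (extCLM I z') - extCLM I (projCLM I (T (extCLM I z')))) i = 0 := by
    intro i hi
    simp [Pi.sub_apply, extCLM_apply, projCLM_apply, hi]
  have h2 := blockV I hT' hr
  funext i
  have hsplit : extCLM I (projCLM I (T (extCLM I z'))) =
      T (extCLM I z') - (T (extCLM I z') - extCLM I (projCLM I (T (extCLM I z')))) :=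
    (sub_sub_cancel _ _).symm
  rw [projCLM_apply, hsplit, map_sub]
  have h3 := h2 i.1 i.2
  simp only [Pi.sub_apply, h3, sub_zero, hTT']
  rw [extCLM_apply]
  exact dif_pos i.2

end Aux2

/-- If `v` is a C¹ diffeomorphism of `ℝ^n` whose Jacobian has a vanishing `(I, Iᶜ)` block
everywhere, then the induced map on the `I`-coordinates is well defined (each `v_i`, `i ∈ I`,
depends only on `x_I`) and is a C¹ diffeomorphism onto its image (injective, C¹, with
invertible differential everywhere). -/
theorem stmt11 {n : ℕ} (v w : (Fin n → ℝ) → (Fin n → ℝ))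
    (hv : ContDiff ℝ 1 v) (hw : ContDiff ℝ 1 w)
    (h1 : Function.LeftInverse w v) (h2 : Function.RightInverse w v)
    (hJ : ∀ x, ∃ Lx : (Fin n → ℝ) ≃L[ℝ] (Fin n → ℝ),
      (fderiv ℝ v x : (Fin n → ℝ) →L[ℝ] (Fin n → ℝ)) = Lx)
    (I : Set (Fin n)) [DecidablePred (· ∈ I)]
    (hblock : ∀ x, ∀ i ∈ I, ∀ j ∉ I,
      fderiv ℝ (fun y => v y i) x (Pi.single j 1) = 0) :
    (∀ x y : Fin n → ℝ, (∀ i ∈ I, x i = y i) → ∀ i ∈ I, v x i = v y i) ∧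
    ContDiff ℝ 1 (restrictMap I v) ∧
    Function.Injective (restrictMap I v) ∧
    ∀ z : ↥I → ℝ, ∃ Lz : (↥I → ℝ) ≃L[ℝ] (↥I → ℝ),
      (fderiv ℝ (restrictMap I v) z : (↥I → ℝ) →L[ℝ] (↥I → ℝ)) = Lz := by
  have hvd := hv.differentiable one_ne_zero
  have hwd := hw.differentiable one_ne_zero
  have hblock' : ∀ x, ∀ i ∈ I, ∀ j ∉ I, fderiv ℝ v x (Pi.single j 1) i = 0 := by
    intro x i hi j hj
    rw [← fderiv_coord v hvd x i]
    exact hblock x i hi j hj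
  have hchainL : ∀ x, (fderiv ℝ w (v x)).comp (fderiv ℝ v x)
      = ContinuousLinearMap.id ℝ (Fin n → ℝ) := by
    intro x
    have h := ((hwd (v x)).hasFDerivAt).comp x ((hvd x).hasFDerivAt)
    have hid : HasFDerivAt (w ∘ v) (ContinuousLinearMap.id ℝ (Fin n → ℝ)) x := by
      have hwv : w ∘ v = id := funext h1
      rw [hwv]; exact hasFDerivAt_id x
    exact h.unique hid
  have hchainR : ∀ y, (fderiv ℝ v (w y)).comp (fderiv ℝ w y)
      = ContinuousLinearMap.id ℝ (Fin n → ℝ) := by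
    intro y
    have h := ((hvd (w y)).hasFDerivAt).comp y ((hwd y).hasFDerivAt)
    have hid : HasFDerivAt (v ∘ w) (ContinuousLinearMap.id ℝ (Fin n → ℝ)) y := by
      have hvw : v ∘ w = id := funext h2
      rw [hvw]; exact hasFDerivAt_id y
    exact h.unique hid
  -- block condition for w
  have wblock : ∀ y, ∀ i ∈ I, ∀ j ∉ I, fderiv ℝ w y (Pi.single j 1) i = 0 := by
    intro y i hi j hj
    have hML : (fderiv ℝ w y).comp (fderiv ℝ v (w y))
        = ContinuousLinearMap.id ℝ (Fin n → ℝ) := by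
      have h := hchainL (w y)
      rwa [h2 y] at h
    have hMLa : ∀ a, fderiv ℝ w y (fderiv ℝ v (w y) a) = a := by
      intro a
      have := DFunLike.congr_fun hML a
      simpa using this
    have hLinj : Function.Injective (fderiv ℝ v (w y)) := by
      intro a b hab
      rw [← hMLa a, ← hMLa b, hab]
    have hLV : ∀ u ∈ Vsub I, fderiv ℝ v (w y) u ∈ Vsub I := by
      intro u hu
      exact blockV I (fun i hi j hj => hblock' (w y) i hi j hj) hu
    set f := ((fderiv ℝ v (w y)) : (Fin n → ℝ) →ₗ[ℝ] (Fin n → ℝ)).restrict hLV with hf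
    have finj : Function.Injective f := by
      intro a b hab
      have := congrArg Subtype.val hab
      simp only [hf, LinearMap.restrict_apply] at this
      exact Subtype.ext (hLinj this)
    have fsurj := LinearMap.injective_iff_surjective.mp finj
    have hsj : (Pi.single j 1 : Fin n → ℝ) ∈ Vsub I := by
      intro i' hi'
      refine Pi.single_eq_of_ne (fun h => hj ?_) 1
      rwa [← h]
    obtain ⟨a, ha⟩ := fsurj ⟨Pi.single j 1, hsj⟩
    have hLa : fderiv ℝ v (w y) a.1 = Pi.single j 1 := by
      have := congrArg Subtype.val ha
      simpa [hf, LinearMap.restrict_apply] using this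
    have hMa : fderiv ℝ w y (Pi.single j 1) = a.1 := by
      rw [← hLa]; exact hMLa a.1
    rw [hMa]
    exact a.2 i hi
  refine ⟨depOnly I v hv hblock', ?_, ?_, ?_⟩
  · rw [restrictMap_eq]
    exact (projCLM I).contDiff.comp (hv.comp (extCLM I).contDiff)
  · intro z₁ z₂ hz
    rw [restrictMap_eq] at hz
    have hvI : ∀ i ∈ I, v (extCLM I z₁) i = v (extCLM I z₂) i := by
      intro i hi
      exact congrFun hz ⟨i, hi⟩
    have hw' := depOnly I w hw wblock (v (extCLM I z₁)) (v (extCLM I z₂)) hvI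
    funext i
    have h3 := hw' i.1 i.2
    rw [h1, h1] at h3
    rw [extCLM_apply, extCLM_apply, dif_pos i.2, dif_pos i.2] at h3
    exact h3
  · intro z
    have hML : (fderiv ℝ w (v (extCLM I z))).comp (fderiv ℝ v (extCLM I z))
        = ContinuousLinearMap.id ℝ (Fin n → ℝ) := hchainL (extCLM I z)
    have hLM : (fderiv ℝ v (extCLM I z)).comp (fderiv ℝ w (v (extCLM I z)))
        = ContinuousLinearMap.id ℝ (Fin n → ℝ) := by
      have h := hchainR (v (extCLM I z))
      rwa [h1 (extCLM I z)] at h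
    have hMLa : ∀ a, fderiv ℝ w (v (extCLM I z)) (fderiv ℝ v (extCLM I z) a) = a := by
      intro a; have := DFunLike.congr_fun hML a; simpa using this
    have hLMa : ∀ a, fderiv ℝ v (extCLM I z) (fderiv ℝ w (v (extCLM I z)) a) = a := by
      intro a; have := DFunLike.congr_fun hLM a; simpa using this
    set A := (projCLM I).comp ((fderiv ℝ v (extCLM I z)).comp (extCLM I)) with hA
    set B := (projCLM I).comp ((fderiv ℝ w (v (extCLM I z))).comp (extCLM I)) with hB
    have hBA : ∀ z', B (A z') = z' := by
      intro z'
      have := keyInv I (fderiv ℝ v (extCLM I z)) (fderiv ℝ w (v (extCLM I z)))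
        (fun i hi j hj => wblock (v (extCLM I z)) i hi j hj) hMLa z'
      simpa [hA, hB] using this
    have hAB : ∀ z', A (B z') = z' := by
      intro z'
      have := keyInv I (fderiv ℝ w (v (extCLM I z))) (fderiv ℝ v (extCLM I z))
        (fun i hi j hj => hblock' (extCLM I z) i hi j hj) hLMa z'
      simpa [hA, hB] using this
    refine ⟨ContinuousLinearEquiv.equivOfInverse A B hBA hAB, ?_⟩
    have hF : HasFDerivAt (restrictMap I v) A z := by
      rw [restrictMap_eq]
      exact ((projCLM I).hasFDerivAt).comp z
        (((hvd (extCLM I z)).hasFDerivAt).comp z ((extCLM I).hasFDerivAt))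
    rw [hF.fderiv]
    rfl
end
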